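/- Let g : (0,T) → ℝ be nonnegative and measurable with ∫ₛᵗ g(τ) dτ ≤ M/s for all 0 < s ≤ t < T. Then for every α > 0 and t ∈ (0,T), ∫₀ᵗ τ^{α+1} g(τ) dτ ≤ (α+1)·M·t^α/α. -/

import Mathlib

open MeasureTheory

/-- Weighted-in-time regularity estimate: if `g ≥ 0` is measurable on `(0,T)` with
`∫ₛᵗ g ≤ M/s` for all `0 < s ≤ t < T`, then for every `α > 0` and `t ∈ (0,T)`,
`∫₀ᵗ τ^(α+1) g(τ) dτ ≤ (α+1)·M·t^α/α`. -/
theorem weighted_time_integral_bound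
    (T M : ℝ) (hM : 0 < M)
    (g : ℝ → ℝ) (hg0 : ∀ s, 0 ≤ g s) (hgmeas : Measurable g)
    (hbound : ∀ s t : ℝ, 0 < s → s ≤ t → t < T → ∫ τ in s..t, g τ ≤ M / s) :
    ∀ α : ℝ, 0 < α → ∀ t ∈ Set.Ioo (0:ℝ) T,
      ∫ τ in (0:ℝ)..t, τ ^ (α + 1) * g τ ≤ (α + 1) * M * t ^ α / α := by
  intro α hα t ht
  obtain ⟨ht0, htT⟩ := ht
  have hα1 : (0:ℝ) < α + 1 := by linarith
  have hRHS : 0 ≤ (α + 1) * M * t ^ α / α := by positivity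
  have hfmeas : Measurable fun τ : ℝ => τ ^ (α + 1) * g τ := by
    exact (measurable_id.pow_const _).mul hgmeas
  by_cases hint : IntegrableOn (fun τ => τ ^ (α + 1) * g τ) (Set.Ioc 0 t) volume
  swap
  · rw [intervalIntegral.integral_undef]
    · exact hRHS
    · intro hc
      exact hint (by rwa [intervalIntegrable_iff, Set.uIoc_of_le ht0.le] at hc)
  -- the double-variable kernel
  set φ : ℝ → ℝ → ENNReal := fun s τ =>
    (Set.Ioo 0 τ).indicator (fun s => ENNReal.ofReal ((α + 1) * s ^ α * g τ)) s with hφ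
  -- Step 1: pointwise identity τ^(α+1) g τ = ∫⁻ s, φ s τ for τ ∈ Ioc 0 t
  have step1 : ∀ τ ∈ Set.Ioc (0:ℝ) t,
      ENNReal.ofReal (τ ^ (α + 1) * g τ) = ∫⁻ s, φ s τ := by
    intro τ hτ
    have hτ0 : 0 < τ := hτ.1
    have hIint : IntegrableOn (fun s : ℝ => (α + 1) * s ^ α * g τ) (Set.Ioo 0 τ) volume := by
      have h1 : IntervalIntegrable (fun s : ℝ => s ^ α) volume 0 τ :=
        intervalIntegral.intervalIntegrable_rpow' (by linarith)
      have h2 := (h1.const_mul (α + 1)).mul_const (g τ)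
      rw [intervalIntegrable_iff, Set.uIoc_of_le hτ0.le] at h2
      exact h2.mono_set Set.Ioo_subset_Ioc_self
    have hnn : 0 ≤ᵐ[volume.restrict (Set.Ioo 0 τ)] fun s : ℝ => (α + 1) * s ^ α * g τ := by
      filter_upwards [ae_restrict_mem measurableSet_Ioo] with s hs
      have : (0:ℝ) ≤ s ^ α := Real.rpow_nonneg hs.1.le α
      have := hg0 τ
      positivity
    have hval : ∫ s in Set.Ioo 0 τ, (α + 1) * s ^ α * g τ = τ ^ (α + 1) * g τ := by
      rw [← integral_Ioc_eq_integral_Ioo, ← intervalIntegral.integral_of_le hτ0.le]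
      have : ∫ s in (0:ℝ)..τ, (α + 1) * s ^ α * g τ
          = ((α + 1) * g τ) * ∫ s in (0:ℝ)..τ, s ^ α := by
        rw [← intervalIntegral.integral_const_mul]
        apply intervalIntegral.integral_congr
        intro s _
        ring
      rw [this, integral_rpow (Or.inl (by linarith : (-1:ℝ) < α))]
      rw [Real.zero_rpow hα1.ne']
      field_simp
      ring
    calc ENNReal.ofReal (τ ^ (α + 1) * g τ)
        = ENNReal.ofReal (∫ s in Set.Ioo 0 τ, (α + 1) * s ^ α * g τ) := by rw [hval]
      _ = ∫⁻ s in Set.Ioo 0 τ, ENNReal.ofReal ((α + 1) * s ^ α * g τ) :=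
          ofReal_integral_eq_lintegral_ofReal hIint hnn
      _ = ∫⁻ s, φ s τ := by rw [hφ, lintegral_indicator measurableSet_Ioo]
  -- Step 2: Tonelli swap
  have hφmeas : Measurable (Function.uncurry fun τ s => φ s τ) := by
    have heq : (Function.uncurry fun τ s => φ s τ)
        = Set.indicator {p : ℝ × ℝ | 0 < p.2 ∧ p.2 < p.1}
            (fun p => ENNReal.ofReal ((α + 1) * p.2 ^ α * g p.1)) := by
      ext p
      simp only [Function.uncurry, hφ, Set.indicator_apply, Set.mem_Ioo, Set.mem_setOf_eq]
    rw [heq]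
    apply Measurable.indicator
    · exact Measurable.ennreal_ofReal
        ((measurable_const.mul (measurable_snd.pow_const _)).mul (hgmeas.comp measurable_fst))
    · exact (measurableSet_lt measurable_const measurable_snd).inter
        (measurableSet_lt measurable_snd measurable_fst)
  have step2 : ∫⁻ τ in Set.Ioc 0 t, ∫⁻ s, φ s τ
      = ∫⁻ s, ∫⁻ τ in Set.Ioc 0 t, φ s τ :=
    lintegral_lintegral_swap hφmeas.aemeasurable
  -- Step 3: identify the inner integral
  have step3 : ∀ s : ℝ, (∫⁻ τ in Set.Ioc 0 t, φ s τ)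
      = (Set.Ioo 0 t).indicator
          (fun s => ∫⁻ τ in Set.Ioc s t, ENNReal.ofReal ((α + 1) * s ^ α * g τ)) s := by
    intro s
    by_cases hs : s ∈ Set.Ioo (0:ℝ) t
    · rw [Set.indicator_of_mem hs]
      have hker : ∀ τ ∈ Set.Ioc (0:ℝ) t, φ s τ
          = (Set.Ioi s).indicator (fun τ => ENNReal.ofReal ((α + 1) * s ^ α * g τ)) τ := by
        intro τ _
        by_cases h : s < τ
        · simp [hφ, Set.indicator_apply, Set.mem_Ioo, Set.mem_Ioi, h, hs.1]
        · simp [hφ, Set.indicator_apply, Set.mem_Ioo, Set.mem_Ioi, h]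
      rw [setLIntegral_congr_fun measurableSet_Ioc
        hker]
      rw [lintegral_indicator measurableSet_Ioi, Measure.restrict_restrict measurableSet_Ioi]
      have hset : Set.Ioi s ∩ Set.Ioc 0 t = Set.Ioc s t := by
        ext τ
        simp only [Set.mem_inter_iff, Set.mem_Ioi, Set.mem_Ioc]
        constructor
        · rintro ⟨h1, _, h3⟩; exact ⟨h1, h3⟩
        · rintro ⟨h1, h2⟩; exact ⟨h1, lt_trans hs.1 h1, h2⟩
      rw [hset]
    · rw [Set.indicator_of_notMem hs]
      have hker : ∀ τ ∈ Set.Ioc (0:ℝ) t, φ s τ = 0 := by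
        intro τ hτ
        apply Set.indicator_of_notMem
        simp only [Set.mem_Ioo]
        rintro ⟨h1, h2⟩
        exact hs ⟨h1, lt_of_lt_of_le h2 hτ.2⟩
      rw [setLIntegral_congr_fun measurableSet_Ioc hker]
      simp
  -- Step 4: bound the inner integral for s ∈ Ioo 0 t
  have step4 : ∀ s ∈ Set.Ioo (0:ℝ) t,
      (∫⁻ τ in Set.Ioc s t, ENNReal.ofReal ((α + 1) * s ^ α * g τ))
        ≤ ENNReal.ofReal ((α + 1) * M * s ^ (α - 1)) := by
    intro s hs
    have hs0 : (0:ℝ) < s := hs.1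
    have hst : s < t := hs.2
    have hsa : (0:ℝ) ≤ (α + 1) * s ^ α := by
      have : (0:ℝ) ≤ s ^ α := Real.rpow_nonneg hs0.le α
      positivity
    -- g is integrable on Ioc s t
    have hg_int : IntegrableOn g (Set.Ioc s t) volume := by
      have hmaj : IntegrableOn (fun τ => s ^ (-(α + 1)) * (τ ^ (α + 1) * g τ))
          (Set.Ioc s t) volume :=
        (hint.mono_set (Set.Ioc_subset_Ioc_left hs0.le)).const_mul _
      apply hmaj.integrable.mono hgmeas.aestronglyMeasurable
      filter_upwards [ae_restrict_mem measurableSet_Ioc] with τ hτ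
      have hτ0 : 0 < τ := lt_trans hs0 hτ.1
      have hpow : s ^ (α + 1) ≤ τ ^ (α + 1) := Real.rpow_le_rpow hs0.le hτ.1.le hα1.le
      have hspow : (0:ℝ) < s ^ (α + 1) := Real.rpow_pos_of_pos hs0 _
      rw [Real.norm_of_nonneg (hg0 τ), Real.norm_of_nonneg]
      · rw [Real.rpow_neg hs0.le]
        rw [← sub_nonneg] at hpow ⊢
        have : (s ^ (α + 1))⁻¹ * (τ ^ (α + 1) * g τ) - g τ
            = (s ^ (α + 1))⁻¹ * ((τ ^ (α + 1) - s ^ (α + 1)) * g τ) := by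
          field_simp
        rw [this]
        have := hg0 τ
        positivity
      · have h1 : (0:ℝ) ≤ s ^ (-(α+1)) := (Real.rpow_pos_of_pos hs0 _).le
        have h2 : (0:ℝ) ≤ τ ^ (α+1) := (Real.rpow_pos_of_pos hτ0 _).le
        have := hg0 τ
        positivity
    have hgb : ∫ τ in Set.Ioc s t, g τ ≤ M / s := by
      rw [← intervalIntegral.integral_of_le hst.le]
      exact hbound s t hs0 hst.le htT
    calc (∫⁻ τ in Set.Ioc s t, ENNReal.ofReal ((α + 1) * s ^ α * g τ))
        = ∫⁻ τ in Set.Ioc s t, ENNReal.ofReal ((α + 1) * s ^ α) * ENNReal.ofReal (g τ) := by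
          apply lintegral_congr
          intro τ
          rw [ENNReal.ofReal_mul hsa]
      _ = ENNReal.ofReal ((α + 1) * s ^ α) * ∫⁻ τ in Set.Ioc s t, ENNReal.ofReal (g τ) :=
          lintegral_const_mul' _ _ ENNReal.ofReal_ne_top
      _ = ENNReal.ofReal ((α + 1) * s ^ α) * ENNReal.ofReal (∫ τ in Set.Ioc s t, g τ) := by
          rw [ofReal_integral_eq_lintegral_ofReal hg_int
            (Filter.Eventually.of_forall fun τ => hg0 τ)]
      _ ≤ ENNReal.ofReal ((α + 1) * s ^ α) * ENNReal.ofReal (M / s) := by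
          exact mul_le_mul_right (ENNReal.ofReal_le_ofReal hgb) _
      _ = ENNReal.ofReal ((α + 1) * s ^ α * (M / s)) := (ENNReal.ofReal_mul hsa).symm
      _ = ENNReal.ofReal ((α + 1) * M * s ^ (α - 1)) := by
          congr 1
          rw [Real.rpow_sub hs0, Real.rpow_one]
          field_simp
  -- Step 5: the final explicit integral
  have step5 : (∫⁻ s in Set.Ioo 0 t, ENNReal.ofReal ((α + 1) * M * s ^ (α - 1)))
      = ENNReal.ofReal ((α + 1) * M * t ^ α / α) := by
    have hIint : IntegrableOn (fun s : ℝ => (α + 1) * M * s ^ (α - 1)) (Set.Ioo 0 t) volume := by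
      have h1 : IntervalIntegrable (fun s : ℝ => s ^ (α - 1)) volume 0 t :=
        intervalIntegral.intervalIntegrable_rpow' (by linarith)
      have h2 := h1.const_mul ((α + 1) * M)
      rw [intervalIntegrable_iff, Set.uIoc_of_le ht0.le] at h2
      exact (h2.mono_set Set.Ioo_subset_Ioc_self)
    have hnn : 0 ≤ᵐ[volume.restrict (Set.Ioo 0 t)] fun s : ℝ => (α + 1) * M * s ^ (α - 1) := by
      filter_upwards [ae_restrict_mem measurableSet_Ioo] with s hs
      have : (0:ℝ) ≤ s ^ (α - 1) := Real.rpow_nonneg hs.1.le _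
      positivity
    rw [← ofReal_integral_eq_lintegral_ofReal hIint hnn]
    congr 1
    rw [← integral_Ioc_eq_integral_Ioo, ← intervalIntegral.integral_of_le ht0.le]
    rw [intervalIntegral.integral_const_mul, integral_rpow (Or.inl (by linarith : (-1:ℝ) < α - 1))]
    rw [sub_add_cancel, Real.zero_rpow hα.ne']
    field_simp
    rw [sub_zero]
  -- Put it together
  rw [intervalIntegral.integral_of_le ht0.le]
  have hnnf : 0 ≤ᵐ[volume.restrict (Set.Ioc 0 t)] fun τ : ℝ => τ ^ (α + 1) * g τ := by
    filter_upwards [ae_restrict_mem measurableSet_Ioc] with τ hτ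
    have : (0:ℝ) ≤ τ ^ (α + 1) := Real.rpow_nonneg hτ.1.le _
    exact mul_nonneg this (hg0 τ)
  rw [integral_eq_lintegral_of_nonneg_ae hnnf hfmeas.aestronglyMeasurable]
  have key : (∫⁻ τ in Set.Ioc 0 t, ENNReal.ofReal (τ ^ (α + 1) * g τ))
      ≤ ENNReal.ofReal ((α + 1) * M * t ^ α / α) := by
    calc (∫⁻ τ in Set.Ioc 0 t, ENNReal.ofReal (τ ^ (α + 1) * g τ))
        = ∫⁻ τ in Set.Ioc 0 t, ∫⁻ s, φ s τ :=
          setLIntegral_congr_fun measurableSet_Ioc step1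
      _ = ∫⁻ s, ∫⁻ τ in Set.Ioc 0 t, φ s τ := step2
      _ = ∫⁻ s, (Set.Ioo 0 t).indicator
            (fun s => ∫⁻ τ in Set.Ioc s t, ENNReal.ofReal ((α + 1) * s ^ α * g τ)) s :=
          lintegral_congr step3
      _ = ∫⁻ s in Set.Ioo 0 t, ∫⁻ τ in Set.Ioc s t, ENNReal.ofReal ((α + 1) * s ^ α * g τ) :=
          lintegral_indicator measurableSet_Ioo _
      _ ≤ ∫⁻ s in Set.Ioo 0 t, ENNReal.ofReal ((α + 1) * M * s ^ (α - 1)) := by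
          apply setLIntegral_mono
          · exact Measurable.ennreal_ofReal
              ((measurable_const.mul measurable_const).mul (measurable_id.pow_const _))
          · exact step4
      _ = ENNReal.ofReal ((α + 1) * M * t ^ α / α) := step5
  calc (∫⁻ τ in Set.Ioc 0 t, ENNReal.ofReal (τ ^ (α + 1) * g τ)).toReal
      ≤ (ENNReal.ofReal ((α + 1) * M * t ^ α / α)).toReal :=
        ENNReal.toReal_mono ENNReal.ofReal_ne_top key
    _ = (α + 1) * M * t ^ α / α := ENNReal.toReal_ofReal hRHS
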